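/- Let M ≥ 0. Under the stated hypotheses on μ and f, the global discrepancy c₁ := ∫_{x ∈ [0,∞)} f(x, M) dμ(x) satisfies 1/2 ≤ c₁ < 1. -/
import Mathlib


open MeasureTheory

/-- Let `M ≥ 0`. Under conditions (A1)–(A3) of a valid parameterization
(normalization, symmetry, monotonicity), together with reflection-invariance of `μ` and
`μ((-∞,0)) > 0`, the global discrepancy `c₁ = ∫_{x ∈ [0,∞)} f(x, M) dμ(x)`
satisfies `1/2 ≤ c₁ < 1`. -/
theorem global_discrepancy_bounds
    (μ : Measure ℝ) (M : ℝ) (hM : 0 ≤ M)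
    (hμinv : μ.map (fun x => -x) = μ)
    (hμneg : 0 < μ (Set.Iio 0))
    (f : ℝ → ℝ → ℝ)
    (hpos : ∀ x y, 0 < f x y)
    (hint : ∀ y, Integrable (fun x => f x y) μ)
    (hnorm : ∀ y, ∫ x, f x y ∂μ = 1)
    (hsym : ∀ x y, f x y = f (-x) (-y))
    (hmono : ∀ x < (0 : ℝ), Antitone (fun y => f x y)) :
    1 / 2 ≤ ∫ x in Set.Ici (0 : ℝ), f x M ∂μ ∧
      ∫ x in Set.Ici (0 : ℝ), f x M ∂μ < 1 := by
  have hintM := hint M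
  have hintM' := hint (-M)
  have hsplit : (∫ x in Set.Iio (0:ℝ), f x M ∂μ) + ∫ x in Set.Ici (0:ℝ), f x M ∂μ = 1 := by
    rw [intervalIntegral.integral_Iio_add_Ici hintM.integrableOn hintM.integrableOn]
    exact hnorm M
  have hemb : MeasurableEmbedding (fun x : ℝ => -x) :=
    (Homeomorph.neg ℝ).measurableEmbedding
  -- reflection identity: ∫_{Iio 0} f x (-M) = ∫_{Ioi 0} f x M
  have hrefl : (∫ x in Set.Iio (0:ℝ), f x (-M) ∂μ) = ∫ x in Set.Ioi (0:ℝ), f x M ∂μ := by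
    calc (∫ x in Set.Iio (0:ℝ), f x (-M) ∂μ)
        = ∫ x in Set.Iio (0:ℝ), f x (-M) ∂(μ.map (fun x => -x)) := by rw [hμinv]
      _ = ∫ x in (fun x : ℝ => -x) ⁻¹' Set.Iio 0, f (-x) (-M) ∂μ :=
          hemb.setIntegral_map _ _
      _ = ∫ x in Set.Ioi (0:ℝ), f x M ∂μ := by
          have hset : (fun x : ℝ => -x) ⁻¹' Set.Iio 0 = Set.Ioi 0 := by
            ext x; simp
          rw [hset]
          exact setIntegral_congr_fun measurableSet_Ioi fun x _ => (hsym x M).symm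
  have hnonneg : ∀ x, (0:ℝ) ≤ f x M := fun x => (hpos x M).le
  -- lower bound pieces
  have h1 : (∫ x in Set.Iio (0:ℝ), f x M ∂μ) ≤ ∫ x in Set.Iio (0:ℝ), f x (-M) ∂μ := by
    apply setIntegral_mono_on hintM.integrableOn hintM'.integrableOn measurableSet_Iio
    intro x hx
    exact hmono x hx (by linarith : -M ≤ M)
  have h2 : (∫ x in Set.Ioi (0:ℝ), f x M ∂μ) ≤ ∫ x in Set.Ici (0:ℝ), f x M ∂μ := by
    apply setIntegral_mono_set hintM.integrableOn
      (Filter.Eventually.of_forall hnonneg)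
    exact Filter.Eventually.of_forall Set.Ioi_subset_Ici_self
  -- the Iio part is positive
  have hIiopos : 0 < ∫ x in Set.Iio (0:ℝ), f x M ∂μ := by
    rw [setIntegral_pos_iff_support_of_nonneg_ae
      (Filter.Eventually.of_forall hnonneg) hintM.integrableOn]
    have : Function.support (fun x => f x M) ∩ Set.Iio 0 = Set.Iio 0 := by
      apply Set.inter_eq_self_of_subset_right
      intro x _
      exact (hpos x M).ne'
    rw [this]; exact hμneg
  constructor
  · linarith
  · linarith
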